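/- For any monoid M, the set X(M) = {aM : a ∈ M} of principal right ideals, ordered by inclusion, is a strong M-partial order: M acts on X(M) by left translation a·(bM) = abM, this action is order-preserving, and for all y ∈ X(M) and a ∈ M one has {a·x : x ≤ y} = {x : x ≤ a·y}. -/
import Mathlib

private lemma sub_iff {M : Type*} [Monoid M] (b c : M) :
    Set.range (b * ·) ⊆ Set.range (c * ·) ↔ ∃ d, c * d = b := by
  constructor
  · intro h
    obtain ⟨d, hd⟩ := h ⟨1, rfl⟩
    exact ⟨d, by simpa using hd⟩
  · rintro ⟨d, rfl⟩ x ⟨e, rfl⟩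
    exact ⟨d * e, by simp [mul_assoc]⟩

private lemma mono {M : Type*} [Monoid M] (a b c : M)
    (h : Set.range (b * ·) ⊆ Set.range (c * ·)) :
    Set.range ((a * b) * ·) ⊆ Set.range ((a * c) * ·) := by
  rw [sub_iff] at h ⊢
  obtain ⟨d, hd⟩ := h
  exact ⟨d, by rw [mul_assoc, hd]⟩

/-- For any monoid `M`, the set `X(M) = {aM : a ∈ M}` of principal
right ideals, ordered by inclusion, is a strong `M`-partial order: the left
translation action `a • (bM) = (a*b)M` is well defined, order preserving, and
`{a • x : x ≤ y} = {x : x ≤ a • y}` for all `y ∈ X(M)`, `a ∈ M`. -/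
theorem stmt_0 (M : Type*) [Monoid M] :
    (∀ a b c : M, Set.range (b * ·) = Set.range (c * ·) →
      Set.range ((a * b) * ·) = Set.range ((a * c) * ·)) ∧
    (∀ a b c : M, Set.range (b * ·) ⊆ Set.range (c * ·) →
      Set.range ((a * b) * ·) ⊆ Set.range ((a * c) * ·)) ∧
    (∀ a y : M,
      {z : Set M | ∃ x : M, Set.range (x * ·) ⊆ Set.range (y * ·) ∧
        z = Set.range ((a * x) * ·)} =
      {z : Set M | ∃ x : M, z = Set.range (x * ·) ∧
        Set.range (x * ·) ⊆ Set.range ((a * y) * ·)}) := by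
  refine ⟨fun a b c h => ?_, mono, fun a y => ?_⟩
  · exact Set.Subset.antisymm (mono a b c h.le) (mono a c b h.ge)
  · ext z
    simp only [Set.mem_setOf_eq]
    constructor
    · rintro ⟨x, hx, rfl⟩
      exact ⟨a * x, rfl, mono a x y hx⟩
    · rintro ⟨x, rfl, hx⟩
      rw [sub_iff] at hx
      obtain ⟨d, hd⟩ := hx
      refine ⟨y * d, (sub_iff _ _).2 ⟨d, rfl⟩, ?_⟩
      rw [← mul_assoc, hd]
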